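/- Let R = k[x,y] and let D = R² with R-linear endomorphism δ given by the matrix [[xy, −y²],[x², −xy]]. Then δ² = 0 and H(D) = ker δ / im δ ≅ k. -/

import Mathlib

set_option synthInstance.maxHeartbeats 1000000

open LinearMap MvPolynomial

/-- The homology `ker δ / im δ` of a differential module. -/
abbrev dHomology {R M : Type*} [CommRing R] [AddCommGroup M] [Module R M]
    (δ : M →ₗ[R] M) : Type _ :=
  LinearMap.ker δ ⧸ (LinearMap.range δ).comap (LinearMap.ker δ).subtype

section ScorpionAux

variable (k : Type*) [Field k]

/-- The map `t ↦ (y t, x t)` whose image is `ker δ`. -/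
noncomputable def scorpionPsi :
    MvPolynomial (Fin 2) k →ₗ[MvPolynomial (Fin 2) k] (Fin 2 → MvPolynomial (Fin 2) k) where
  toFun t := ![X 1 * t, X 0 * t]
  map_add' a b := by
    funext i; fin_cases i <;> simp <;> ring
  map_smul' c a := by
    funext i; fin_cases i <;> simp [smul_eq_mul] <;> ring

lemma scorpion_prime_X1 : Prime (X 1 : MvPolynomial (Fin 2) k) := by
  have h0 : Prime (X 0 : MvPolynomial (Fin 2) k) := by
    rw [← MulEquiv.prime_iff (MvPolynomial.finSuccEquiv k 1).toMulEquiv]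
    have : (MvPolynomial.finSuccEquiv k 1).toMulEquiv (X 0) = Polynomial.X := by
      simpa using MvPolynomial.finSuccEquiv_X_zero (R := k) (n := 1)
    rw [this]
    exact Polynomial.prime_X
  have := (MulEquiv.prime_iff (MvPolynomial.renameEquiv k (Equiv.swap (0 : Fin 2) 1)).toMulEquiv
    (p := (X 0 : MvPolynomial (Fin 2) k))).symm
  rw [this] at h0
  simpa [MvPolynomial.renameEquiv, Equiv.swap_apply_left] using h0

end ScorpionAux

set_option maxHeartbeats 1000000 in
/-- Over `R = k[x,y]`, the rank 2 free module `D = R²` with differential given by the matrix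
`[[xy, -y²], [x², -xy]]` satisfies `δ² = 0` and `H(D) = ker δ / im δ ≅ k = R/(x,y)`. -/
theorem example_minimized_scorpion
    (k : Type*) [Field k]
    (δ : (Fin 2 → MvPolynomial (Fin 2) k) →ₗ[MvPolynomial (Fin 2) k]
         (Fin 2 → MvPolynomial (Fin 2) k))
    (hδ : δ = Matrix.toLin'
      !![X 0 * X 1,  -(X 1 * X 1);
         X 0 * X 0,  -(X 0 * X 1)]) :
    δ ∘ₗ δ = 0 ∧
    Nonempty (dHomology δ ≃ₗ[MvPolynomial (Fin 2) k]
      (MvPolynomial (Fin 2) k ⧸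
        Ideal.span {(X 0 : MvPolynomial (Fin 2) k), X 1})) := by
  have hX1ne : (X 1 : MvPolynomial (Fin 2) k) ≠ 0 := MvPolynomial.X_ne_zero 1
  have hp1 : Prime (X 1 : MvPolynomial (Fin 2) k) := scorpion_prime_X1 k
  -- the differential sends `v` to `(x v₀ - y v₁) • (y, x)`
  have happly : ∀ v : Fin 2 → MvPolynomial (Fin 2) k,
      δ v = ![X 1 * (X 0 * v 0 - X 1 * v 1), X 0 * (X 0 * v 0 - X 1 * v 1)] := by
    intro v
    rw [hδ]
    funext i
    fin_cases i <;>
      simp [Matrix.toLin'_apply, Matrix.mulVec, dotProduct, Fin.sum_univ_two] <;> ring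
  have hdd : δ ∘ₗ δ = 0 := by
    apply LinearMap.ext
    intro v
    rw [LinearMap.comp_apply, happly v, happly]
    funext i
    fin_cases i <;> simp <;> ring
  -- kernel characterization
  have hker : ∀ v : Fin 2 → MvPolynomial (Fin 2) k,
      v ∈ LinearMap.ker δ ↔ ∃ t, v = ![X 1 * t, X 0 * t] := by
    intro v
    constructor
    · intro hv
      rw [LinearMap.mem_ker] at hv
      have h0 : X 1 * (X 0 * v 0 - X 1 * v 1) = 0 := by
        have := (happly v).symm.trans hv
        simpa using congrFun this 0
      have heq : X 0 * v 0 = X 1 * v 1 := by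
        rcases mul_eq_zero.mp h0 with h | h
        · exact absurd h hX1ne
        · exact sub_eq_zero.mp h
      have hdvd : (X 1 : MvPolynomial (Fin 2) k) ∣ v 0 := by
        have hd : (X 1 : MvPolynomial (Fin 2) k) ∣ X 0 * v 0 := ⟨v 1, heq⟩
        rcases hp1.2.2 _ _ hd with h | h
        · exact absurd h (by simp)
        · exact h
      obtain ⟨t, ht⟩ := hdvd
      refine ⟨t, ?_⟩
      funext i
      fin_cases i
      · simpa using ht
      · have h1 : X 1 * v 1 = X 1 * (X 0 * t) := by rw [← heq, ht]; ring
        simpa using mul_left_cancel₀ hX1ne h1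
    · rintro ⟨t, rfl⟩
      rw [LinearMap.mem_ker, happly]
      funext i
      fin_cases i <;> simp <;> ring
  -- range characterization
  have hrange : ∀ w : Fin 2 → MvPolynomial (Fin 2) k,
      w ∈ LinearMap.range δ ↔
        ∃ t ∈ Ideal.span {(X 0 : MvPolynomial (Fin 2) k), X 1}, w = ![X 1 * t, X 0 * t] := by
    intro w
    constructor
    · rintro ⟨v, rfl⟩
      refine ⟨X 0 * v 0 - X 1 * v 1, ?_, happly v⟩
      rw [Ideal.mem_span_pair]
      exact ⟨v 0, -(v 1), by ring⟩
    · rintro ⟨t, ht, rfl⟩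
      rw [Ideal.mem_span_pair] at ht
      obtain ⟨a, b, hab⟩ := ht
      refine ⟨![a, -b], ?_⟩
      rw [happly]
      funext i
      fin_cases i <;> simp <;> rw [← hab] <;> ring
  -- the surjection `R → ker δ`
  have hψker : ∀ t, scorpionPsi k t ∈ LinearMap.ker δ := fun t => (hker _).mpr ⟨t, rfl⟩
  set N : Submodule (MvPolynomial (Fin 2) k) (LinearMap.ker δ) :=
    (LinearMap.range δ).comap (LinearMap.ker δ).subtype with hN
  set Ψ : MvPolynomial (Fin 2) k →ₗ[MvPolynomial (Fin 2) k] LinearMap.ker δ :=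
    (scorpionPsi k).codRestrict (LinearMap.ker δ) hψker with hΨ
  set F : MvPolynomial (Fin 2) k →ₗ[MvPolynomial (Fin 2) k] dHomology δ :=
    N.mkQ.comp Ψ with hF
  have hFsurj : Function.Surjective F := by
    intro q
    obtain ⟨⟨v, hv⟩, rfl⟩ := N.mkQ_surjective q
    obtain ⟨t, rfl⟩ := (hker v).mp hv
    exact ⟨t, rfl⟩
  have hFker : LinearMap.ker F = Ideal.span {(X 0 : MvPolynomial (Fin 2) k), X 1} := by
    ext t
    constructor
    · intro h
      have hmem : Ψ t ∈ N := by
        rw [LinearMap.mem_ker, hF, LinearMap.comp_apply] at h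
        rwa [← Submodule.Quotient.mk_eq_zero, ← Submodule.mkQ_apply]
      have hr : scorpionPsi k t ∈ LinearMap.range δ := hmem
      obtain ⟨s, hs, heqn⟩ := (hrange _).mp hr
      have h0 : X 1 * t = X 1 * s := by
        have := congrFun heqn 0
        simpa [scorpionPsi] using this
      rwa [mul_left_cancel₀ hX1ne h0]
    · intro ht
      rw [LinearMap.mem_ker, hF, LinearMap.comp_apply, Submodule.mkQ_apply,
        Submodule.Quotient.mk_eq_zero]
      show scorpionPsi k t ∈ LinearMap.range δ
      exact (hrange _).mpr ⟨t, ht, rfl⟩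
  refine ⟨hdd, ⟨?_⟩⟩
  exact (F.quotKerEquivOfSurjective hFsurj).symm.trans (Submodule.quotEquivOfEq _ _ hFker)
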